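/- For every θ > 0 and all x, y ∈ ℝ, the integral-type Gaussian kernel satisfies π^{−1/2} ∫_ℝ exp(−θ²(x−z)² − θ²(y−z)² − z²) dz = (2θ² + 1)^{−1/2} · exp(−((θ⁴ + θ²)/(2θ² + 1))·(x − y)² − (2θ²/(2θ² + 1))·x·y). -/

import Mathlib

open MeasureTheory Real

/-- **Explicit form of the integral-type Gaussian kernel.** For every `θ > 0` and
all `x, y ∈ ℝ`,
`π^{−1/2} ∫_ℝ exp(−θ²(x−z)² − θ²(y−z)² − z²) dz
  = (2θ²+1)^{−1/2} exp(−((θ⁴+θ²)/(2θ²+1))(x−y)² − (2θ²/(2θ²+1)) x y)`. -/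
theorem stmt11 (θ : ℝ) (hθ : 0 < θ) (x y : ℝ) :
    Real.pi ^ (-(1 : ℝ) / 2) *
        ∫ z : ℝ, Real.exp (-θ ^ 2 * (x - z) ^ 2 - θ ^ 2 * (y - z) ^ 2 - z ^ 2) =
      (2 * θ ^ 2 + 1) ^ (-(1 : ℝ) / 2) *
        Real.exp (-((θ ^ 4 + θ ^ 2) / (2 * θ ^ 2 + 1)) * (x - y) ^ 2 -
          (2 * θ ^ 2 / (2 * θ ^ 2 + 1)) * (x * y)) := by
  set a : ℝ := 2 * θ ^ 2 + 1 with ha_def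
  have ha : 0 < a := by positivity
  set m : ℝ := θ ^ 2 * (x + y) / a with hm_def
  set C : ℝ := θ ^ 4 * (x + y) ^ 2 / a - θ ^ 2 * (x ^ 2 + y ^ 2) with hC_def
  have key : ∀ z : ℝ,
      Real.exp (-θ ^ 2 * (x - z) ^ 2 - θ ^ 2 * (y - z) ^ 2 - z ^ 2) =
        Real.exp (-a * (z - m) ^ 2) * Real.exp C := by
    intro z
    rw [← Real.exp_add]
    congr 1
    rw [hm_def, hC_def]
    field_simp
    ring
  simp_rw [key, integral_mul_const]
  rw [integral_sub_right_eq_self (fun u : ℝ => Real.exp (-a * u ^ 2)) m,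
    integral_gaussian]
  have h1 : Real.pi ^ (-(1 : ℝ) / 2) * √(π / a) = a ^ (-(1 : ℝ) / 2) := by
    rw [Real.sqrt_eq_rpow, Real.div_rpow pi_pos.le ha.le, mul_div_assoc',
      ← Real.rpow_add pi_pos]
    norm_num [Real.rpow_neg ha.le]
  rw [← mul_assoc, h1]
  congr 1
  rw [hC_def]
  congr 1
  field_simp
  ring
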